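/- Define B_{k}(x) as the minimum over input sequences in U^k of max{ max_{0 ≤ t ≤ k-1} α^t (h(x_t) + λ_t), α^k B_0(x_k) } with x_0 = x, where B_0 is a CBF satisfying the appropriate tightening condition. Then the safe sets are nested: S_{B_0} ⊆ S_{B_1} ⊆ S_{B_2} ⊆ ..., i.e., B_k(x) ≤ 0 implies B_{k+1}(x) ≤ 0 for all k ≥ 0. -/

import Mathlib

/-- Closed-loop trajectory: x_0 = x, x_{t+1} = f(x_t, u_t). -/
def traj {σ υ : Type*} (f : σ → υ → σ) (x : σ) (u : ℕ → υ) : ℕ → σ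
  | 0 => x
  | t + 1 => f (traj f x u t) (u t)

/-- Cost max{ max_{0 ≤ t ≤ k-1} α^t (h(x_t) + λ_t), α^k B_0(x_k) }. -/
noncomputable def reachCostGen {σ υ : Type*} (f : σ → υ → σ) (h B0 : σ → ℝ)
    (α : ℝ) (lam : ℕ → ℝ) (k : ℕ) (x : σ) (u : ℕ → υ) : ℝ :=
  max (⨆ t : Fin k, α ^ (t : ℕ) * (h (traj f x u t) + lam t))
    (α ^ k * B0 (traj f x u k))

/-- the safe sets produced by the reachability CBF generator are
nested: B_k(x) ≤ 0 implies B_{k+1}(x) ≤ 0, i.e. S_{B_k} ⊆ S_{B_{k+1}}. -/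
theorem reachability_safe_sets_nested
    {σ υ : Type*} (f : σ → υ → σ) (h : σ → ℝ) (U : Set υ) (B0 : σ → ℝ)
    (α : ℝ) (hα : 1 ≤ α) (lam : ℕ → ℝ) (hlam_nonneg : ∀ t, 0 ≤ lam t)
    (hlam_mono : Monotone lam) (k : ℕ) (hk : 1 ≤ k)
    -- B_0 is a CBF satisfying the appropriate tightening condition:
    (hSB0_ne : {x : σ | B0 x ≤ 0}.Nonempty)
    (hSB0_tight : ∀ x, B0 x ≤ 0 → h x + lam k ≤ 0)
    (hSB0_feas : ∀ x, B0 x ≤ 0 → ∃ u ∈ U, B0 (f x u) ≤ 0)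
    -- B_k and B_{k+1} are attained minima of the reachability cost:
    (Bk Bk1 : σ → ℝ)
    (hBk_att : ∀ x : σ, ∃ u : ℕ → υ, (∀ t, u t ∈ U) ∧
      Bk x = reachCostGen f h B0 α lam k x u)
    (hBk_lb : ∀ (x : σ) (u : ℕ → υ), (∀ t, u t ∈ U) →
      Bk x ≤ reachCostGen f h B0 α lam k x u)
    (hBk1_att : ∀ x : σ, ∃ u : ℕ → υ, (∀ t, u t ∈ U) ∧
      Bk1 x = reachCostGen f h B0 α lam (k + 1) x u)
    (hBk1_lb : ∀ (x : σ) (u : ℕ → υ), (∀ t, u t ∈ U) →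
      Bk1 x ≤ reachCostGen f h B0 α lam (k + 1) x u) :
    ∀ x, Bk x ≤ 0 → Bk1 x ≤ 0 := by
  intro x hx
  obtain ⟨u, hu, heq⟩ := hBk_att x
  have hα0 : (0:ℝ) < α := lt_of_lt_of_le one_pos hα
  have hcost : reachCostGen f h B0 α lam k x u ≤ 0 := heq ▸ hx
  rw [reachCostGen, max_le_iff] at hcost
  obtain ⟨hsup, hlast⟩ := hcost
  have hterm : ∀ t : Fin k, α ^ (t:ℕ) * (h (traj f x u t) + lam t) ≤ 0 := fun t =>
    le_trans (le_ciSup (f := fun t : Fin k => α ^ (t:ℕ) * (h (traj f x u t) + lam t))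
      (Set.Finite.bddAbove (Set.finite_range _)) t) hsup
  have hB0k : B0 (traj f x u k) ≤ 0 := by
    nlinarith [pow_pos hα0 k]
  obtain ⟨u', hu'U, hu'B⟩ := hSB0_feas _ hB0k
  set u₁ : ℕ → υ := fun t => if t = k then u' else u t with hu₁def
  have hu₁U : ∀ t, u₁ t ∈ U := by
    intro t; by_cases ht : t = k <;> simp [hu₁def, ht, hu'U, hu t]
  have htraj : ∀ t, t ≤ k → traj f x u₁ t = traj f x u t := by
    intro t
    induction t with
    | zero => intro _; rfl
    | succ n ih =>
      intro hn
      have hn' : n < k := by omega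
      simp only [traj, ih (le_of_lt hn')]
      congr 1
      simp [hu₁def, Nat.ne_of_lt hn']
  refine le_trans (hBk1_lb x u₁ hu₁U) ?_
  rw [reachCostGen]
  apply max_le
  · apply ciSup_le
    intro t
    rcases lt_or_eq_of_le (Nat.lt_succ_iff.mp t.2) with hlt | heqk
    · rw [htraj t (le_of_lt hlt)]
      exact hterm ⟨t, hlt⟩
    · rw [heqk, htraj k le_rfl]
      exact mul_nonpos_of_nonneg_of_nonpos (le_of_lt (pow_pos hα0 _))
        (hSB0_tight _ hB0k)
  · have h2 : traj f x u₁ (k+1) = f (traj f x u k) u' := by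
      show f (traj f x u₁ k) (u₁ k) = _
      rw [htraj k le_rfl]
      simp [hu₁def]
    rw [h2]
    exact mul_nonpos_of_nonneg_of_nonpos (le_of_lt (pow_pos hα0 _)) hu'B
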